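/- There exists a universal constant C > 0 with the following property. Let c > 0 be a real constant, let G be a finite connected simple graph on a vertex set V of size n ≥ 2 equipped with a fixed linear order on V, and set β = 1/(2c) (which corresponds to choosing k = c · log n in the exponential start time decomposition). Let (δ_u)_{u ∈ V} be independent random variables, each exponentially distributed with rate β, and define cluster(w) := the least vertex u ∈ V (in the fixed linear order) minimizing dist_G(u, w) − δ_u. Then for every vertex v ∈ V, the expected number of distinct labels in {cluster(w) : w ∈ V, dist_G(v, w) ≤ 1} is at most C · e^{1/c}; in particular this expectation is bounded by a constant independent of n. -/

import Mathlib

open MeasureTheory ProbabilityTheory Finset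

lemma aux_measurable_inf' {ι δ : Type*} [MeasurableSpace δ] (s : Finset ι) (hs : s.Nonempty)
    (f : ι → δ → ℝ) (hf : ∀ i, Measurable (f i)) :
    Measurable (fun x => s.inf' hs fun i => f i x) := by
  induction hs using Finset.Nonempty.cons_induction with
  | singleton i => simpa using hf i
  | cons i s his hs ih =>
    have he : (fun x => (Finset.cons i s his).inf' (Finset.cons_nonempty his) fun j => f j x)
        = fun x => (f i x) ⊓ (s.inf' hs fun j => f j x) := by
      funext x; exact Finset.inf'_cons (H := hs) (f := fun j => f j x) (hb := his)
    rw [he]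
    exact (hf i).min ih

lemma aux_expMeasure_Iic {β : ℝ} (hβ : 0 < β) (s : ℝ) :
    expMeasure β (Set.Iic s) = ENNReal.ofReal (if 0 ≤ s then 1 - Real.exp (-(β * s)) else 0) := by
  have : IsProbabilityMeasure (expMeasure β) := isProbabilityMeasure_expMeasure hβ
  rw [← ofReal_cdf]
  congr 1
  exact cdf_expMeasure_eq hβ s

lemma aux_expMeasure_singleton {β : ℝ} (s : ℝ) : expMeasure β {s} = 0 := by
  have h : expMeasure β ≪ (volume : Measure ℝ) :=
    withDensity_absolutelyContinuous volume (gammaPDF 1 β)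
  exact h (measure_singleton s)

lemma aux_expMeasure_Ioi {β : ℝ} (hβ : 0 < β) (s : ℝ) :
    expMeasure β (Set.Ioi s) = ENNReal.ofReal (Real.exp (-(β * max s 0))) := by
  have : IsProbabilityMeasure (expMeasure β) := isProbabilityMeasure_expMeasure hβ
  have h1 : expMeasure β (Set.Ioi s) = 1 - expMeasure β (Set.Iic s) := by
    rw [← Set.compl_Iic, measure_compl measurableSet_Iic (measure_ne_top _ _), measure_univ]
  rw [h1, aux_expMeasure_Iic hβ]
  rcases le_or_gt 0 s with h | h
  · rw [if_pos h, max_eq_left h]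
    have he : Real.exp (-(β * s)) ≤ 1 :=
      Real.exp_le_one_iff.2 (by nlinarith)
    refine ENNReal.sub_eq_of_eq_add ENNReal.ofReal_ne_top ?_
    rw [← ENNReal.ofReal_add (Real.exp_nonneg _) (by linarith), ← ENNReal.ofReal_one]
    congr 1
    ring
  · rw [if_neg (not_le.2 h), max_eq_right h.le]
    simp

lemma aux_expMeasure_Ici {β : ℝ} (hβ : 0 < β) (s : ℝ) :
    expMeasure β (Set.Ici s) = ENNReal.ofReal (Real.exp (-(β * max s 0))) := by
  rw [← aux_expMeasure_Ioi hβ]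
  refine le_antisymm ?_ (measure_mono Set.Ioi_subset_Ici_self)
  calc expMeasure β (Set.Ici s) ≤ expMeasure β (Set.Ioi s) + expMeasure β {s} := by
        rw [← Set.Ioi_union_left]; exact measure_union_le _ _
    _ = expMeasure β (Set.Ioi s) := by rw [aux_expMeasure_singleton, add_zero]

lemma aux_measure_preimage_ae_eq {Ω : Type*} [MeasurableSpace Ω] {μ : Measure Ω}
    {f g : Ω → ℝ} (h : f =ᵐ[μ] g) (s : Set ℝ) : μ (f ⁻¹' s) = μ (g ⁻¹' s) := by
  apply measure_congr
  rw [Filter.eventuallyEq_set]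
  filter_upwards [h] with ω hω
  simp [Set.mem_preimage, hω]

lemma aux_iIndepFun_ae_congr {Ω ι : Type*} [MeasurableSpace Ω] {μ : Measure Ω} {f g : ι → Ω → ℝ}
    (hfg : ∀ i, f i =ᵐ[μ] g i)
    (hf : iIndepFun f μ) : iIndepFun g μ := by
  rw [iIndepFun_iff_measure_inter_preimage_eq_mul] at hf ⊢
  intro S sets hsets
  have hS : ∀ᵐ ω ∂μ, ∀ i ∈ S, f i ω = g i ω :=
    (Filter.eventually_all_finset S).2 fun i _ => hfg i
  have h1 : μ (⋂ i ∈ S, g i ⁻¹' sets i) = μ (⋂ i ∈ S, f i ⁻¹' sets i) := by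
    apply measure_congr
    rw [Filter.eventuallyEq_set]
    filter_upwards [hS] with ω hω
    simp only [Set.mem_iInter, Set.mem_preimage]
    constructor <;> intro h i hi
    · rw [hω i hi]; exact h i hi
    · rw [← hω i hi]; exact h i hi
  rw [h1, hf S hsets]
  exact Finset.prod_congr rfl fun i _ => aux_measure_preimage_ae_eq (hfg i) _

lemma aux_survival_bound {β : ℝ} (hβ : 0 < β) {Ω : Type*} [MeasurableSpace Ω] (μ : Measure Ω)
    [IsProbabilityMeasure μ] {Y Z : Ω → ℝ} (hY : Measurable Y) (hZ : Measurable Z)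
    (hmap : μ.map Y = expMeasure β) (hind : IndepFun Z Y μ) :
    μ {ω | Z ω - 2 ≤ Y ω} ≤ ENNReal.ofReal (Real.exp (2 * β)) * μ {ω | Z ω < Y ω} := by
  have hprod := (indepFun_iff_map_prod_eq_prod_map_map hZ.aemeasurable hY.aemeasurable).1 hind
  haveI : IsProbabilityMeasure (μ.map Z) := Measure.isProbabilityMeasure_map hZ.aemeasurable
  haveI : IsProbabilityMeasure (expMeasure β) := isProbabilityMeasure_expMeasure hβ
  have hm1 : MeasurableSet {p : ℝ × ℝ | p.1 - 2 ≤ p.2} :=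
    measurableSet_le (measurable_fst.sub measurable_const) measurable_snd
  have hm2 : MeasurableSet {p : ℝ × ℝ | p.1 < p.2} := measurableSet_lt measurable_fst measurable_snd
  have e1 : μ {ω | Z ω - 2 ≤ Y ω} = ((μ.map Z).prod (expMeasure β)) {p : ℝ × ℝ | p.1 - 2 ≤ p.2} := by
    rw [← hmap, ← hprod, Measure.map_apply (hZ.prodMk hY) hm1]
    rfl
  have e2 : μ {ω | Z ω < Y ω} = ((μ.map Z).prod (expMeasure β)) {p : ℝ × ℝ | p.1 < p.2} := by
    rw [← hmap, ← hprod, Measure.map_apply (hZ.prodMk hY) hm2]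
    rfl
  rw [e1, e2, Measure.prod_apply hm1, Measure.prod_apply hm2]
  have hmeasf : Measurable fun z : ℝ => ENNReal.ofReal (Real.exp (-(β * max z 0))) :=
    (Real.measurable_exp.comp ((measurable_const.mul (measurable_id.max measurable_const)).neg)).ennreal_ofReal
  calc ∫⁻ z, expMeasure β (Prod.mk z ⁻¹' {p : ℝ × ℝ | p.1 - 2 ≤ p.2}) ∂(μ.map Z)
      = ∫⁻ z, ENNReal.ofReal (Real.exp (-(β * max (z - 2) 0))) ∂(μ.map Z) := by
        refine lintegral_congr fun z => ?_
        have : (Prod.mk z ⁻¹' {p : ℝ × ℝ | p.1 - 2 ≤ p.2}) = Set.Ici (z - 2) := rfl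
        rw [this, aux_expMeasure_Ici hβ]
    _ ≤ ∫⁻ z, ENNReal.ofReal (Real.exp (2 * β)) * ENNReal.ofReal (Real.exp (-(β * max z 0))) ∂(μ.map Z) := by
        refine lintegral_mono fun z => ?_
        rw [← ENNReal.ofReal_mul (Real.exp_nonneg _), ← Real.exp_add]
        refine ENNReal.ofReal_le_ofReal (Real.exp_le_exp.2 ?_)
        have h1 : max z 0 ≤ max (z - 2) 0 + 2 :=
          max_le (by linarith [le_max_left (z - 2) (0:ℝ)]) (by linarith [le_max_right (z - 2) (0:ℝ)])
        nlinarith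
    _ = ENNReal.ofReal (Real.exp (2 * β)) * ∫⁻ z, ENNReal.ofReal (Real.exp (-(β * max z 0))) ∂(μ.map Z) :=
        lintegral_const_mul _ hmeasf
    _ = ENNReal.ofReal (Real.exp (2 * β)) * ∫⁻ z, expMeasure β (Prod.mk z ⁻¹' {p : ℝ × ℝ | p.1 < p.2}) ∂(μ.map Z) := by
        congr 1
        refine lintegral_congr fun z => ?_
        have : (Prod.mk z ⁻¹' {p : ℝ × ℝ | p.1 < p.2}) = Set.Ioi z := rfl
        rw [this, aux_expMeasure_Ioi hβ]

/-- With `β = 1/(2c)` (i.e. `k = c · log n`) in the exponential start time decomposition,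
the expected number of clusters intersecting the radius-1 ball around any vertex is at most
`C · e^{1/c}`, a constant independent of `n`. -/
theorem ball_intersects_constant_clusters_expectation
    : ∃ C : ℝ, 0 < C ∧
      ∀ (c : ℝ), 0 < c →
      ∀ (V : Type) [Fintype V] [LinearOrder V] (G : SimpleGraph V),
        G.Connected → 2 ≤ Fintype.card V →
      ∀ (Ω : Type) [MeasurableSpace Ω] (μ : Measure Ω), IsProbabilityMeasure μ →
      ∀ (δ : V → Ω → ℝ),
        (∀ u : V, Measure.map (δ u) μ = expMeasure (1 / (2 * c))) →
        iIndepFun δ μ →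
      ∀ (cluster : Ω → V → V),
        (∀ (ω : Ω) (w : V),
          IsLeast {u : V | ∀ u' : V,
              (G.dist u w : ℝ) - δ u ω ≤ (G.dist u' w : ℝ) - δ u' ω}
            (cluster ω w)) →
      ∀ v : V,
        ∫ ω, ((((Finset.univ.filter (fun w => G.dist v w ≤ 1))).image
            (cluster ω)).card : ℝ) ∂μ
          ≤ C * Real.exp (1 / c) := by
  refine ⟨1, one_pos, ?_⟩
  intro c hc V _ _ G hconn hcard Ω _ μ hμ δ hmap hindep cluster hclu v
  haveI := hμ
  set β : ℝ := 1 / (2 * c) with hβdef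
  have hβ : 0 < β := by positivity
  haveI : IsProbabilityMeasure (expMeasure β) := isProbabilityMeasure_expMeasure hβ
  -- a.e. measurable versions
  have hδae : ∀ u, AEMeasurable (δ u) μ := by
    intro u
    by_contra h
    have h2 := hmap u
    rw [Measure.map_of_not_aemeasurable h] at h2
    have h3 := congrArg (fun m : Measure ℝ => m Set.univ) h2
    simp [measure_univ] at h3
  set g : V → Ω → ℝ := fun u => (hδae u).mk (δ u) with hgdef
  have hgmeas : ∀ u, Measurable (g u) := fun u => (hδae u).measurable_mk
  have hgae : ∀ u, δ u =ᵐ[μ] g u := fun u => (hδae u).ae_eq_mk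
  have hgmap : ∀ u, μ.map (g u) = expMeasure β := fun u => by
    rw [← Measure.map_congr (hgae u)]; exact hmap u
  have hgindep : iIndepFun g μ := aux_iIndepFun_ae_congr hgae hindep
  -- setup
  have hne : ∀ u : V, ((univ.erase u) : Finset V).Nonempty := by
    intro u
    rw [← Finset.card_pos, Finset.card_erase_of_mem (mem_univ u), Finset.card_univ]
    omega
  have hne' : ∀ u : V, ((univ.erase u) : Finset V).attach.Nonempty :=
    fun u => Finset.attach_nonempty_iff.2 (hne u)
  set a : V → ℝ := fun u => (G.dist u v : ℝ) with hadef
  set M : V → Ω → ℝ :=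
    fun u ω => ((univ.erase u) : Finset V).attach.inf' (hne' u) (fun j => a j.1 - g j.1 ω) with hMdef
  have hMmeas : ∀ u, Measurable (M u) :=
    fun u => aux_measurable_inf' _ (hne' u) _ (fun j => measurable_const.sub (hgmeas j.1))
  set Z : V → Ω → ℝ := fun u ω => a u - M u ω with hZdef
  have hZmeas : ∀ u, Measurable (Z u) := fun u => measurable_const.sub (hMmeas u)
  set A : V → Set Ω := fun u => {ω | Z u ω < g u ω} with hAdef
  set B : V → Set Ω := fun u => {ω | Z u ω - 2 ≤ g u ω} with hBdef
  have hAmeas : ∀ u, MeasurableSet (A u) := fun u => measurableSet_lt (hZmeas u) (hgmeas u)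
  have hBmeas : ∀ u, MeasurableSet (B u) :=
    fun u => measurableSet_le ((hZmeas u).sub measurable_const) (hgmeas u)
  -- independence of Z u and g u
  have hindZ : ∀ u, IndepFun (Z u) (g u) μ := by
    intro u
    have h0 := hgindep.indepFun_finset (univ.erase u) {u} (by simp) hgmeas
    have hφ : Measurable (fun x : ({j // j ∈ univ.erase u} → ℝ) =>
        a u - ((univ.erase u) : Finset V).attach.inf' (hne' u) (fun j => a j.1 - x j)) :=
      measurable_const.sub (aux_measurable_inf' _ (hne' u)
        (fun (j : {j // j ∈ univ.erase u}) (x : {j // j ∈ univ.erase u} → ℝ) =>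
          a j.1 - x j)
        (fun j => measurable_const.sub (measurable_pi_apply j)))
    have hψ : Measurable (fun x : (({u} : Finset V) → ℝ) => x ⟨u, Finset.mem_singleton_self u⟩) :=
      measurable_pi_apply _
    exact h0.comp hφ hψ
  -- key bound per u
  have hkey : ∀ u, μ (B u) ≤ ENNReal.ofReal (Real.exp (2 * β)) * μ (A u) :=
    fun u => aux_survival_bound hβ μ (hgmeas u) (hZmeas u) (hgmap u) (hindZ u)
  -- characterizations
  have hAchar : ∀ u ω, ω ∈ A u ↔ ∀ j, j ≠ u → a u - g u ω < a j - g j ω := by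
    intro u ω
    have h1 : ω ∈ A u ↔ a u - g u ω < M u ω := by
      simp only [hAdef, Set.mem_setOf_eq, hZdef]
      constructor <;> intro h <;> linarith
    rw [h1, hMdef, Finset.lt_inf'_iff]
    constructor
    · intro h j hj
      exact h ⟨j, Finset.mem_erase.2 ⟨hj, mem_univ j⟩⟩ (Finset.mem_attach _ _)
    · intro h j _
      exact h j.1 (Finset.mem_erase.1 j.2).1
  have hBchar : ∀ u ω, (∀ j, j ≠ u → a u - g u ω - 2 ≤ a j - g j ω) → ω ∈ B u := by
    intro u ω h
    have h1 : a u - g u ω - 2 ≤ M u ω := by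
      rw [hMdef, Finset.le_inf'_iff]
      intro j _
      exact h j.1 (Finset.mem_erase.1 j.2).1
    simp only [hBdef, Set.mem_setOf_eq, hZdef]
    linarith
  -- disjointness and sum bound for A
  have hsumA : ∑ u : V, μ (A u) ≤ 1 := by
    have hdisj : (↑(Finset.univ : Finset V) : Set V).PairwiseDisjoint A := by
      intro u _ u' _ huu'
      refine Set.disjoint_left.2 fun ω hu hu' => ?_
      have h1 := (hAchar u ω).1 hu u' (Ne.symm huu')
      have h2 := (hAchar u' ω).1 hu' u huu'
      linarith
    calc ∑ u : V, μ (A u) = μ (⋃ u ∈ (univ : Finset V), A u) :=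
          (measure_biUnion_finset hdisj (fun u _ => hAmeas u)).symm
      _ ≤ μ Set.univ := measure_mono (Set.subset_univ _)
      _ = 1 := measure_univ
  -- pointwise a.e. bound
  have hptwise : ∀ᵐ ω ∂μ,
      ((((Finset.univ.filter (fun w => G.dist v w ≤ 1))).image (cluster ω)).card : ℝ)
        ≤ ∑ u : V, Set.indicator (B u) (fun _ => (1 : ℝ)) ω := by
    have hall : ∀ᵐ ω ∂μ, ∀ u, δ u ω = g u ω := ae_all_iff.2 fun u => hgae u
    filter_upwards [hall] with ω hω
    have hsub : ((Finset.univ.filter (fun w => G.dist v w ≤ 1))).image (cluster ω)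
        ⊆ univ.filter (fun u => ω ∈ B u) := by
      intro u hu
      simp only [Finset.mem_image, Finset.mem_filter, Finset.mem_univ, true_and] at hu ⊢
      obtain ⟨w, hw, rfl⟩ := hu
      have hmem := (hclu ω w).1
      refine hBchar _ ω fun j _ => ?_
      have h1 := hmem j
      rw [hω (cluster ω w), hω j] at h1
      have htri1 : (G.dist (cluster ω w) v : ℝ) ≤ (G.dist (cluster ω w) w : ℝ) + (G.dist w v : ℝ) := by
        exact_mod_cast hconn.dist_triangle
      have htri2 : (G.dist j w : ℝ) ≤ (G.dist j v : ℝ) + (G.dist v w : ℝ) := by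
        exact_mod_cast hconn.dist_triangle
      have hcomm : (G.dist w v : ℝ) = (G.dist v w : ℝ) := by
        rw [SimpleGraph.dist_comm]
      have hdle : (G.dist v w : ℝ) ≤ 1 := by exact_mod_cast hw
      simp only [hadef]
      linarith
    calc ((((Finset.univ.filter (fun w => G.dist v w ≤ 1))).image (cluster ω)).card : ℝ)
        ≤ ((univ.filter (fun u => ω ∈ B u)).card : ℝ) := by
          exact_mod_cast Finset.card_le_card hsub
      _ = ∑ u : V, Set.indicator (B u) (fun _ => (1 : ℝ)) ω := by
          rw [Finset.card_filter]
          push_cast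
          refine Finset.sum_congr rfl fun u _ => ?_
          rw [Set.indicator_apply]
  -- integrability of the dominating function
  have hFint : Integrable (fun ω => ∑ u : V, Set.indicator (B u) (fun _ => (1 : ℝ)) ω) μ :=
    integrable_finset_sum _ fun u _ => (integrable_const (1 : ℝ)).indicator (hBmeas u)
  have hFval : ∫ ω, (∑ u : V, Set.indicator (B u) (fun _ => (1 : ℝ)) ω) ∂μ
      = ∑ u : V, (μ (B u)).toReal := by
    rw [integral_finset_sum _ fun u _ => (integrable_const (1 : ℝ)).indicator (hBmeas u)]
    refine Finset.sum_congr rfl fun u _ => ?_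
    rw [integral_indicator_const (1 : ℝ) (hBmeas u), smul_eq_mul, mul_one, measureReal_def]
  -- real-valued bounds
  have hIB : ∀ u, (μ (B u)).toReal ≤ Real.exp (2 * β) * (μ (A u)).toReal := by
    intro u
    have h2 : (ENNReal.ofReal (Real.exp (2 * β)) * μ (A u)).toReal
        = Real.exp (2 * β) * (μ (A u)).toReal := by
      rw [ENNReal.toReal_mul, ENNReal.toReal_ofReal (Real.exp_nonneg _)]
    rw [← h2]
    exact ENNReal.toReal_mono (ENNReal.mul_ne_top ENNReal.ofReal_ne_top (measure_ne_top μ _))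
      (hkey u)
  have hsumA' : ∑ u : V, (μ (A u)).toReal ≤ 1 := by
    rw [← ENNReal.toReal_sum (fun u _ => measure_ne_top μ _)]
    calc (∑ u : V, μ (A u)).toReal ≤ (1 : ENNReal).toReal := ENNReal.toReal_mono ENNReal.one_ne_top hsumA
      _ = 1 := by simp
  have hExp : Real.exp (2 * β) = Real.exp (1 / c) := by
    rw [hβdef]
    congr 1
    field_simp
  have hfinal : ∑ u : V, (μ (B u)).toReal ≤ Real.exp (1 / c) := by
    calc ∑ u : V, (μ (B u)).toReal ≤ ∑ u : V, Real.exp (2 * β) * (μ (A u)).toReal :=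
          Finset.sum_le_sum fun u _ => hIB u
      _ = Real.exp (2 * β) * ∑ u : V, (μ (A u)).toReal := by rw [Finset.mul_sum]
      _ ≤ Real.exp (2 * β) * 1 := by
          exact mul_le_mul_of_nonneg_left hsumA' (Real.exp_nonneg _)
      _ = Real.exp (1 / c) := by rw [mul_one, hExp]
  rw [one_mul]
  by_cases hInt : Integrable (fun ω =>
      ((((Finset.univ.filter (fun w => G.dist v w ≤ 1))).image (cluster ω)).card : ℝ)) μ
  · calc ∫ ω, ((((Finset.univ.filter (fun w => G.dist v w ≤ 1))).image (cluster ω)).card : ℝ) ∂μ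
        ≤ ∫ ω, (∑ u : V, Set.indicator (B u) (fun _ => (1 : ℝ)) ω) ∂μ :=
          integral_mono_ae hInt hFint hptwise
      _ = ∑ u : V, (μ (B u)).toReal := hFval
      _ ≤ Real.exp (1 / c) := hfinal
  · rw [integral_undef hInt]
    positivity
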